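/- Let P be a Π-invariant, Π-irreducible transition kernel satisfying a geometric drift condition PV ≤ γV + b·1_C with γ ∈ (0,1), b < ∞, C a small set, and V : E → [1,∞] with V < ∞ Π-a.s. Then there exists s > 1 such that the function x ↦ Σ_{n=0}^∞ s^n (I_{C^c} P)^n(x, E) is Π-integrable. -/

import Mathlib

open MeasureTheory ProbabilityTheory
open scoped ENNReal

/-- The `k`-step kernel `P^k`. -/
noncomputable def iterKernel {E : Type*} [MeasurableSpace E] (P : Kernel E E) : ℕ → Kernel E E
  | 0 => Kernel.id
  | n + 1 => P ∘ₖ iterKernel P n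

/-- `C` is a small set for `P`. -/
def IsSmallSet {E : Type*} [MeasurableSpace E] (P : Kernel E E) (C : Set E) : Prop :=
  ∃ (k : ℕ) (δ : ℝ) (ν : Measure E), 1 ≤ k ∧ δ ∈ Set.Ioo (0:ℝ) 1 ∧ IsProbabilityMeasure ν ∧
    ∀ x ∈ C, ∀ A : Set E, MeasurableSet A → ENNReal.ofReal δ * ν A ≤ iterKernel P k x A

/-- The total masses `(I_{Cᶜ}P)^n(x, E)` of the iterates of the kernel restricted (at the
source) to `Cᶜ`:  `g 0 x = 1` and `g (n+1) x = 1_{Cᶜ}(x) ∫ g n (y) P(x, dy)`. -/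
noncomputable def restrictedIterMass {E : Type*} [MeasurableSpace E]
    (P : Kernel E E) (C : Set E) : ℕ → E → ℝ≥0∞
  | 0, _ => 1
  | n + 1, x => Cᶜ.indicator (fun x' => ∫⁻ y, restrictedIterMass P C n y ∂(P x')) x

/-- If a `Π`-invariant, `Π`-irreducible transition kernel `P` satisfies a geometric drift
condition `PV ≤ γ V + b 1_C` (with `γ ∈ (0,1)`, `b < ∞`, `C` a small set, `V : E → [1,∞]`
finite `Π`-a.s.), then there exists `s > 1` such that
`x ↦ Σ_{n≥0} sⁿ (I_{Cᶜ}P)ⁿ(x, E)` is `Π`-integrable. -/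
theorem restricted_iterates_summable_integrable
    {E : Type*} [MeasurableSpace E]
    (P : Kernel E E) [IsMarkovKernel P] (Pr : Measure E) [IsProbabilityMeasure Pr]
    (hinv : ∀ A : Set E, MeasurableSet A → ∫⁻ x, P x A ∂Pr = Pr A)
    (hirr : ∀ x : E, Pr ≪ Measure.sum (fun k : ℕ => iterKernel P (k + 1) x))
    (C : Set E) (hCmeas : MeasurableSet C) (hCsmall : IsSmallSet P C)
    (V : E → ℝ≥0∞) (hVmeas : Measurable V) (hV1 : ∀ x, 1 ≤ V x)
    (hVfin : Pr {x | V x = ∞} = 0)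
    (γ b : ℝ) (hγ : γ ∈ Set.Ioo (0:ℝ) 1) (hb : 0 ≤ b)
    (hdrift : ∀ x, ∫⁻ y, V y ∂(P x) ≤
      ENNReal.ofReal γ * V x + ENNReal.ofReal b * C.indicator 1 x) :
    ∃ s : ℝ, 1 < s ∧
      ∫⁻ x, (∑' n : ℕ, ENNReal.ofReal (s ^ n) * restrictedIterMass P C n x) ∂Pr < ∞ := by
  obtain ⟨hγ0, hγ1⟩ := hγ
  set γ' : ℝ≥0∞ := ENNReal.ofReal γ with hγ'def
  set b' : ℝ≥0∞ := ENNReal.ofReal b with hb'def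
  have hγ'lt : γ' < 1 := by
    rw [hγ'def]; exact ENNReal.ofReal_lt_one.mpr hγ1
  -- Step 1: restrictedIterMass n x ≤ γ'^n * V x
  have hdrift' : ∀ x, x ∉ C → ∫⁻ y, V y ∂(P x) ≤ γ' * V x := by
    intro x hx
    simpa [Set.indicator_of_notMem hx] using hdrift x
  have hA : ∀ n x, restrictedIterMass P C n x ≤ γ' ^ n * V x := by
    intro n
    induction n with
    | zero => intro x; simpa [restrictedIterMass] using hV1 x
    | succ n ih =>
      intro x
      rw [restrictedIterMass]
      by_cases hx : x ∈ Cᶜ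
      · rw [Set.indicator_of_mem hx]
        calc ∫⁻ y, restrictedIterMass P C n y ∂(P x)
            ≤ ∫⁻ y, γ' ^ n * V y ∂(P x) := lintegral_mono fun y => ih y
          _ = γ' ^ n * ∫⁻ y, V y ∂(P x) := lintegral_const_mul _ hVmeas
          _ ≤ γ' ^ n * (γ' * V x) := by gcongr; exact hdrift' x hx
          _ = γ' ^ (n + 1) * V x := by ring
      · rw [Set.indicator_of_notMem hx]; exact zero_le'
  -- Step 2: invariance for lintegrals
  have hbind : Pr.bind (⇑P) = Pr := by
    ext A hAm
    rw [Measure.bind_apply hAm P.measurable.aemeasurable]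
    exact hinv A hAm
  have hinvf : ∀ f : E → ℝ≥0∞, Measurable f →
      ∫⁻ x, ∫⁻ y, f y ∂(P x) ∂Pr = ∫⁻ x, f x ∂Pr := by
    intro f hf
    conv_rhs => rw [← hbind]
    rw [Measure.lintegral_bind P.measurable.aemeasurable hf.aemeasurable]
  -- Step 3: one-step truncated drift for the integral
  have hstep : ∀ (n : ℕ) (M : ℝ≥0∞),
      ∫⁻ x, min (γ' ^ n * V x) M ∂Pr ≤
        ∫⁻ x, min (γ' ^ (n + 1) * V x) M ∂Pr + γ' ^ n * b' := by
    intro n M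
    rw [← hinvf (fun x => min (γ' ^ n * V x) M) ((hVmeas.const_mul _).min measurable_const)]
    calc ∫⁻ x, ∫⁻ y, min (γ' ^ n * V y) M ∂(P x) ∂Pr
        ≤ ∫⁻ x, (min (γ' ^ (n + 1) * V x) M + γ' ^ n * b') ∂Pr := ?_
      _ = ∫⁻ x, min (γ' ^ (n + 1) * V x) M ∂Pr + γ' ^ n * b' := by
          rw [lintegral_add_right _ measurable_const, lintegral_const, measure_univ, mul_one]
    apply lintegral_mono
    intro x
    have h1 : ∫⁻ y, min (γ' ^ n * V y) M ∂(P x) ≤ min (γ' ^ n * ∫⁻ y, V y ∂(P x)) M := by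
      refine le_min ?_ ?_
      · rw [← lintegral_const_mul _ hVmeas]
        exact lintegral_mono fun y => min_le_left _ _
      · calc ∫⁻ y, min (γ' ^ n * V y) M ∂(P x) ≤ ∫⁻ _, M ∂(P x) :=
              lintegral_mono fun y => min_le_right _ _
          _ = M := by simp
    refine h1.trans ?_
    have h2 : γ' ^ n * ∫⁻ y, V y ∂(P x) ≤ γ' ^ (n + 1) * V x + γ' ^ n * b' := by
      calc γ' ^ n * ∫⁻ y, V y ∂(P x)
          ≤ γ' ^ n * (γ' * V x + b' * C.indicator 1 x) := by gcongr; exact hdrift x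
        _ ≤ γ' ^ n * (γ' * V x + b' * 1) := by
            gcongr
            exact Set.indicator_le_self C 1 x
        _ = γ' ^ (n + 1) * V x + γ' ^ n * b' := by ring
    calc min (γ' ^ n * ∫⁻ y, V y ∂(P x)) M
        ≤ min (γ' ^ (n + 1) * V x + γ' ^ n * b') M := min_le_min h2 le_rfl
      _ ≤ min (γ' ^ (n + 1) * V x) M + γ' ^ n * b' := by
          rcases le_total (γ' ^ (n + 1) * V x) M with h | h
          · rw [min_eq_left h]
            exact min_le_left _ _
          · rw [min_eq_right h]
            exact le_add_right (min_le_right _ _)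
  -- Step 4: iterate the drift
  have hiter : ∀ (M : ℝ≥0∞) (n : ℕ),
      ∫⁻ x, min (V x) M ∂Pr ≤
        ∫⁻ x, min (γ' ^ n * V x) M ∂Pr + b' * ∑ i ∈ Finset.range n, γ' ^ i := by
    intro M n
    induction n with
    | zero => simp
    | succ n ih =>
      refine ih.trans ?_
      calc ∫⁻ x, min (γ' ^ n * V x) M ∂Pr + b' * ∑ i ∈ Finset.range n, γ' ^ i
          ≤ (∫⁻ x, min (γ' ^ (n + 1) * V x) M ∂Pr + γ' ^ n * b')
              + b' * ∑ i ∈ Finset.range n, γ' ^ i := by gcongr; exact hstep n M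
        _ = ∫⁻ x, min (γ' ^ (n + 1) * V x) M ∂Pr + b' * ∑ i ∈ Finset.range (n + 1), γ' ^ i := by
            rw [Finset.sum_range_succ]; ring
  have hsum : ∀ n : ℕ, (∑ i ∈ Finset.range n, γ' ^ i) ≤ (1 - γ')⁻¹ := by
    intro n
    calc (∑ i ∈ Finset.range n, γ' ^ i) ≤ ∑' i : ℕ, γ' ^ i := ENNReal.sum_le_tsum _
      _ = (1 - γ')⁻¹ := ENNReal.tsum_geometric γ'
  -- Step 5: dominated convergence
  have hae : ∀ᵐ x ∂Pr, V x ≠ ∞ := by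
    rw [ae_iff]
    simpa using hVfin
  have hBtend : ∀ m : ℕ,
      Filter.Tendsto (fun n => ∫⁻ x, min (γ' ^ n * V x) (m : ℝ≥0∞) ∂Pr)
        Filter.atTop (nhds 0) := by
    intro m
    have key := tendsto_lintegral_of_dominated_convergence
      (μ := Pr) (F := fun n x => min (γ' ^ n * V x) (m : ℝ≥0∞)) (f := fun _ => (0 : ℝ≥0∞))
      (fun _ => (m : ℝ≥0∞))
      (fun n => (hVmeas.const_mul _).min measurable_const)
      (fun n => Filter.Eventually.of_forall fun x => min_le_right _ _)
      (by simp)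
      ?_
    · simpa using key
    · filter_upwards [hae] with x hx
      have h1 : Filter.Tendsto (fun n => γ' ^ n * V x) Filter.atTop (nhds 0) := by
        have h0 := ENNReal.tendsto_pow_atTop_nhds_zero_of_lt_one hγ'lt
        simpa using ENNReal.Tendsto.mul_const h0 (Or.inr hx)
      have h2 := h1.min (tendsto_const_nhds (x := (m : ℝ≥0∞)) (f := Filter.atTop))
      simpa using h2
  -- Step 6: integrability of V
  have hVM : ∀ m : ℕ, ∫⁻ x, min (V x) (m : ℝ≥0∞) ∂Pr ≤ b' * (1 - γ')⁻¹ := by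
    intro m
    have hle : ∀ n : ℕ, ∫⁻ x, min (V x) (m : ℝ≥0∞) ∂Pr ≤
        ∫⁻ x, min (γ' ^ n * V x) (m : ℝ≥0∞) ∂Pr + b' * (1 - γ')⁻¹ := fun n =>
      (hiter _ n).trans (by gcongr; exact hsum n)
    have htend : Filter.Tendsto
        (fun n => ∫⁻ x, min (γ' ^ n * V x) (m : ℝ≥0∞) ∂Pr + b' * (1 - γ')⁻¹)
        Filter.atTop (nhds (0 + b' * (1 - γ')⁻¹)) := (hBtend m).add tendsto_const_nhds
    have := ge_of_tendsto htend (Filter.Eventually.of_forall hle)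
    simpa using this
  have hVint : ∫⁻ x, V x ∂Pr ≤ b' * (1 - γ')⁻¹ := by
    have hmono : Monotone fun m : ℕ => fun x => min (V x) (m : ℝ≥0∞) := by
      intro m n hmn x
      exact min_le_min le_rfl (Nat.cast_le.mpr hmn)
    have heq : ∫⁻ x, V x ∂Pr = ⨆ m : ℕ, ∫⁻ x, min (V x) (m : ℝ≥0∞) ∂Pr := by
      rw [← lintegral_iSup (fun m => hVmeas.min measurable_const) hmono]
      congr 1
      funext x
      refine (le_antisymm (iSup_le fun m => min_le_left _ _) ?_).symm
      rcases eq_or_ne (V x) ∞ with hx | hx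
      · rw [hx]
        calc (⊤ : ℝ≥0∞) = ⨆ m : ℕ, (m : ℝ≥0∞) := ENNReal.iSup_natCast.symm
          _ ≤ ⨆ m : ℕ, min (⊤ : ℝ≥0∞) (m : ℝ≥0∞) :=
              iSup_mono fun m => le_min le_top le_rfl
      · obtain ⟨k, hk⟩ := ENNReal.exists_nat_gt hx
        calc V x = min (V x) (k : ℝ≥0∞) := (min_eq_left hk.le).symm
          _ ≤ ⨆ m : ℕ, min (V x) (m : ℝ≥0∞) := le_iSup (fun m : ℕ => min (V x) (m : ℝ≥0∞)) k
    rw [heq]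
    exact iSup_le hVM
  -- Step 7: choose s and conclude
  refine ⟨2 / (1 + γ), ?_, ?_⟩
  · rw [lt_div_iff₀ (by linarith)]
    linarith
  · set s : ℝ := 2 / (1 + γ) with hsdef
    have hs0 : 0 < s := by positivity
    set r : ℝ≥0∞ := ENNReal.ofReal (s * γ) with hrdef
    have hr1 : r < 1 := by
      rw [hrdef]
      apply ENNReal.ofReal_lt_one.mpr
      rw [hsdef, div_mul_eq_mul_div, div_lt_one (by linarith)]
      linarith
    have hpt : ∀ x, (∑' n : ℕ, ENNReal.ofReal (s ^ n) * restrictedIterMass P C n x)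
        ≤ (1 - r)⁻¹ * V x := by
      intro x
      have hterm : ∀ n : ℕ,
          ENNReal.ofReal (s ^ n) * restrictedIterMass P C n x ≤ r ^ n * V x := by
        intro n
        have h1 : ENNReal.ofReal (s ^ n) * (γ' ^ n * V x) = r ^ n * V x := by
          rw [hrdef, ENNReal.ofReal_mul hs0.le, mul_pow, ENNReal.ofReal_pow hs0.le, mul_assoc]
        calc ENNReal.ofReal (s ^ n) * restrictedIterMass P C n x
            ≤ ENNReal.ofReal (s ^ n) * (γ' ^ n * V x) := by gcongr; exact hA n x
          _ = r ^ n * V x := h1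
      calc (∑' n : ℕ, ENNReal.ofReal (s ^ n) * restrictedIterMass P C n x)
          ≤ ∑' n : ℕ, r ^ n * V x := ENNReal.tsum_le_tsum hterm
        _ = (∑' n : ℕ, r ^ n) * V x := ENNReal.tsum_mul_right
        _ = (1 - r)⁻¹ * V x := by rw [ENNReal.tsum_geometric]
    have hfin1 : (1 - r)⁻¹ ≠ ∞ := by
      rw [ENNReal.inv_ne_top]
      exact (tsub_pos_of_lt hr1).ne'
    have hfin2 : b' * (1 - γ')⁻¹ ≠ ∞ := by
      apply ENNReal.mul_ne_top ENNReal.ofReal_ne_top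
      rw [ENNReal.inv_ne_top]
      exact (tsub_pos_of_lt hγ'lt).ne'
    calc ∫⁻ x, (∑' n : ℕ, ENNReal.ofReal (s ^ n) * restrictedIterMass P C n x) ∂Pr
        ≤ ∫⁻ x, (1 - r)⁻¹ * V x ∂Pr := lintegral_mono hpt
      _ = (1 - r)⁻¹ * ∫⁻ x, V x ∂Pr := lintegral_const_mul _ hVmeas
      _ ≤ (1 - r)⁻¹ * (b' * (1 - γ')⁻¹) := by gcongr
      _ < ∞ := ENNReal.mul_lt_top hfin1.lt_top hfin2.lt_top
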